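/- Consider a 4-dimensional vector space with basis e₁,e₂,e₃,e₄ and an antisymmetric bracket with only possibly nonzero structure constants C²₁₂, C²₃₄, C³₁₃, C³₁₄, C⁴₁₃, C⁴₁₄, C²₁₃, C²₁₄ (so that [e₁,e₂] = C²₁₂e₂, [e₃,e₄] = C²₃₄e₂, [e₁,e₃] = C²₁₃e₂ + C³₁₃e₃ + C⁴₁₃e₄, [e₁,e₄] = C²₁₄e₂ + C³₁₄e₃ + C⁴₁₄e₄). The Jacobi identity holds if and only if C²₃₄ · (C²₁₂ − C³₁₃ − C⁴₁₄) = 0. -/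

import Mathlib

/-- A trilinear Jacobi-type expression vanishes everywhere once it vanishes on a basis. -/
lemma trilinear_jacobi_of_basis {V : Type*} [AddCommGroup V] [Module ℝ V]
    (b : Module.Basis (Fin 4) ℝ V) (μ : V →ₗ[ℝ] V →ₗ[ℝ] V)
    (h : ∀ i j k : Fin 4,
      μ (b i) (μ (b j) (b k)) + μ (b j) (μ (b k) (b i)) + μ (b k) (μ (b i) (b j)) = 0) :
    ∀ x y z : V, μ x (μ y z) + μ y (μ z x) + μ z (μ x y) = 0 := by
  have hz : ∀ (i j : Fin 4) (z : V),
      μ (b i) (μ (b j) z) + μ (b j) (μ z (b i)) + μ z (μ (b i) (b j)) = 0 := by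
    intro i j
    have he : ((μ (b i)) ∘ₗ (μ (b j)) + (μ (b j)) ∘ₗ (μ.flip (b i))
        + μ.flip (μ (b i) (b j))) = (0 : V →ₗ[ℝ] V) :=
      b.ext fun k => by simpa using h i j k
    intro z
    simpa using LinearMap.congr_fun he z
  have hy : ∀ (i : Fin 4) (y z : V),
      μ (b i) (μ y z) + μ y (μ z (b i)) + μ z (μ (b i) y) = 0 := by
    intro i y z
    have he : ((μ (b i)) ∘ₗ (μ.flip z) + μ.flip (μ z (b i))
        + (μ z) ∘ₗ (μ (b i))) = (0 : V →ₗ[ℝ] V) :=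
      b.ext fun j => by simpa using hz i j z
    simpa using LinearMap.congr_fun he y
  intro x y z
  have he : (μ.flip (μ y z) + (μ y) ∘ₗ (μ z) + (μ z) ∘ₗ (μ.flip y))
      = (0 : V →ₗ[ℝ] V) :=
    b.ext fun i => by simpa using hy i y z
  simpa using LinearMap.congr_fun he x

theorem dim4_typeIII_jacobi_iff
    (V : Type*) [AddCommGroup V] [Module ℝ V]
    (b : Module.Basis (Fin 4) ℝ V)
    (μ : V →ₗ[ℝ] V →ₗ[ℝ] V)
    (halt : ∀ x y : V, μ x y = - μ y x)
    (C212 C234 C313 C314 C413 C414 C213 C214 : ℝ)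
    (h12 : μ (b 0) (b 1) = C212 • b 1)
    (h34 : μ (b 2) (b 3) = C234 • b 1)
    (h13 : μ (b 0) (b 2) = C213 • b 1 + C313 • b 2 + C413 • b 3)
    (h14 : μ (b 0) (b 3) = C214 • b 1 + C314 • b 2 + C414 • b 3)
    (h23 : μ (b 1) (b 2) = 0)
    (h24 : μ (b 1) (b 3) = 0) :
    (∀ x y z : V, μ x (μ y z) + μ y (μ z x) + μ z (μ x y) = 0) ↔
      C234 * (C212 - C313 - C414) = 0 := by
  have hsq : ∀ x : V, μ x x = 0 := by
    intro x
    have h2 : (2 : ℝ) • μ x x = 0 := by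
      rw [two_smul]; nth_rewrite 1 [halt x x]; simp
    exact (smul_eq_zero.mp h2).resolve_left (by norm_num)
  have h21 : μ (b 1) (b 0) = -(C212 • b 1) := by rw [halt, h12]
  have h43 : μ (b 3) (b 2) = -(C234 • b 1) := by rw [halt, h34]
  have h31 : μ (b 2) (b 0) = -(C213 • b 1 + C313 • b 2 + C413 • b 3) := by rw [halt, h13]
  have h41 : μ (b 3) (b 0) = -(C214 • b 1 + C314 • b 2 + C414 • b 3) := by rw [halt, h14]
  have h32 : μ (b 2) (b 1) = 0 := by rw [halt, h23, neg_zero]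
  have h42 : μ (b 3) (b 1) = 0 := by rw [halt, h24, neg_zero]
  constructor
  · intro hJ
    have key := hJ (b 0) (b 2) (b 3)
    rw [h34, h41, h13] at key
    simp only [map_smul, map_neg, map_add, h12, h34, h23, h32, h42, h43, hsq,
      smul_zero, smul_neg, smul_smul, neg_zero, add_zero, zero_add, neg_neg] at key
    have key2 : (C234 * C212 - C414 * C234 - C313 * C234) • b 1 = 0 := by
      rw [← key]; module
    have hb1 : b 1 ≠ 0 := b.ne_zero 1
    have := (smul_eq_zero.mp key2).resolve_right hb1
    linarith [this]
  · intro hc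
    apply trilinear_jacobi_of_basis b μ
    intro i j k
    have e2 : (⟨2, by omega⟩ : Fin 4) = 2 := rfl
    have e3 : (⟨3, by omega⟩ : Fin 4) = 3 := rfl
    fin_cases i <;> fin_cases j <;> fin_cases k <;>
      simp only [Fin.mk_zero, Fin.mk_one, e2, e3, Fin.isValue, h12, h34, h13, h14, h23, h24, h21, h43, h31, h41, h32, h42, hsq,
        map_smul, map_neg, map_add, map_zero, smul_zero, smul_neg, smul_add, smul_smul,
        neg_zero, add_zero, zero_add, neg_neg, neg_add_rev] <;>
      match_scalars <;> (first | ring1 | linear_combination hc | linear_combination -hc)
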